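/- arXiv:0912.2138 — 2 statements merged into one kernel-verified Lean document; each statement's English description precedes it below -/
import Mathlib

section
/- Let α > 2 be a real number and D > 0. Let u = (1, 0) and v = (1/2, √3/2) in ℝ², and let Λ = {D·(a·u + b·v) : (a, b) ∈ ℤ², (a, b) ≠ (0, 0)} be the set of nonzero points of the hexagonal lattice scaled to minimum distance D. Then the family (‖x‖^(−α))_{x ∈ Λ} is summable and Σ_{x ∈ Λ} ‖x‖^(−α) ≤ 6·D^(−α)·(1 + (2/√3)^α · 1/(α−2)). -/
open scoped ENNReal

private def hexN (q : ℤ × ℤ) : ℕ := max (max q.1.natAbs q.2.natAbs) (q.1+q.2).natAbs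

private lemma hexQ_one (a b : ℤ) (h : ¬(a = 0 ∧ b = 0)) : 1 ≤ a^2 + a*b + b^2 := by
  rcases eq_or_ne b 0 with rb | rb
  · subst rb; simp at h ⊢
    nlinarith [Int.one_le_abs h, sq_abs a, sq_nonneg (|a| - 1)]
  · nlinarith [sq_nonneg (2*a+b), Int.one_le_abs rb, sq_abs b, sq_nonneg (|b| - 1)]

private lemma hexQ_shell (a b : ℤ) : 3*(hexN (a,b) : ℤ)^2 ≤ 4*(a^2 + a*b + b^2) := by
  have h2 : (a = (hexN (a,b) : ℤ) ∨ a = -(hexN (a,b) : ℤ)) ∨ (b = (hexN (a,b):ℤ) ∨ b = -(hexN (a,b):ℤ))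
      ∨ (a+b = (hexN (a,b):ℤ) ∨ a+b = -(hexN (a,b):ℤ)) := by
    simp only [hexN]; omega
  rcases h2 with (h2|h2)|(h2|h2)|(h2|h2) <;>
    nlinarith [sq_nonneg (a-b), sq_nonneg (a+2*b), sq_nonneg (2*a+b)]

private lemma hexN_bounds (a b : ℤ) (n : ℕ) (h : hexN (a,b) = n) :
    -(n:ℤ) ≤ a ∧ a ≤ n ∧ -(n:ℤ) ≤ b ∧ b ≤ n := by
  simp only [hexN] at h; omega

private lemma hexN_zero (a b : ℤ) (h : hexN (a,b) = 0) : a = 0 ∧ b = 0 := by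
  simp only [hexN] at h; omega

private lemma hex_shell_card (n : ℕ) (hn : 1 ≤ n) :
    (((Finset.Icc (-(n:ℤ)) n) ×ˢ (Finset.Icc (-(n:ℤ)) n)).filter
      (fun q : ℤ × ℤ => hexN q = n)).card ≤ 6*n := by
  classical
  have hsub : (((Finset.Icc (-(n:ℤ)) n) ×ˢ (Finset.Icc (-(n:ℤ)) n)).filter
      (fun q : ℤ × ℤ => hexN q = n))
      ⊆ ((Finset.Ioc (-(n:ℤ)) 0).image (fun b => ((n:ℤ), b)))
        ∪ ((Finset.Ico (0:ℤ) n).image (fun a => (a, (n:ℤ) - a)))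
        ∪ ((Finset.Ico (-(n:ℤ)) 0).image (fun a => (a, (n:ℤ))))
        ∪ ((Finset.Ico (0:ℤ) n).image (fun b => (-(n:ℤ), b)))
        ∪ ((Finset.Ioc (-(n:ℤ)) 0).image (fun a => (a, -(n:ℤ) - a)))
        ∪ ((Finset.Ioc (0:ℤ) n).image (fun a => (a, -(n:ℤ)))) := by
    rintro ⟨a, b⟩ hq
    rw [Finset.mem_filter] at hq
    have hq2 : max (max a.natAbs b.natAbs) (a+b).natAbs = n := by
      have := hq.2; simpa only [hexN] using this
    clear hq
    have h2 : (a = (n:ℤ) ∧ -(n:ℤ) < b ∧ b ≤ 0) ∨ (a + b = (n:ℤ) ∧ 0 ≤ a ∧ a < n)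
        ∨ (b = (n:ℤ) ∧ -(n:ℤ) ≤ a ∧ a < 0) ∨ (a = -(n:ℤ) ∧ 0 ≤ b ∧ b < n)
        ∨ (a + b = -(n:ℤ) ∧ -(n:ℤ) < a ∧ a ≤ 0) ∨ (b = -(n:ℤ) ∧ 0 < a ∧ a ≤ n) := by
      omega
    simp only [Finset.mem_union, Finset.mem_image, Finset.mem_Ioc, Finset.mem_Ico,
      Prod.mk.injEq]
    rcases h2 with h2|h2|h2|h2|h2|h2
    · exact Or.inl <| Or.inl <| Or.inl <| Or.inl <| Or.inl ⟨b, ⟨by omega, by omega⟩, by omega, rfl⟩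
    · exact Or.inl <| Or.inl <| Or.inl <| Or.inl <| Or.inr ⟨a, ⟨by omega, by omega⟩, rfl, by omega⟩
    · exact Or.inl <| Or.inl <| Or.inl <| Or.inr ⟨a, ⟨by omega, by omega⟩, rfl, by omega⟩
    · exact Or.inl <| Or.inl <| Or.inr ⟨b, ⟨by omega, by omega⟩, by omega, rfl⟩
    · exact Or.inl <| Or.inr ⟨a, ⟨by omega, by omega⟩, rfl, by omega⟩
    · exact Or.inr ⟨a, ⟨by omega, by omega⟩, rfl, by omega⟩
  refine le_trans (Finset.card_le_card hsub) ?_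
  refine le_trans (Finset.card_union_le _ _) ?_
  have c1 : ∀ (s : Finset ℤ) (f : ℤ → ℤ × ℤ), (s.image f).card ≤ s.card :=
    fun s f => Finset.card_image_le
  have h0 : (Finset.Ioc (-(n:ℤ)) 0).card = n := by rw [Int.card_Ioc]; omega
  have h1 : (Finset.Ico (-(n:ℤ)) 0).card = n := by rw [Int.card_Ico]; omega
  have h3 : (Finset.Ico (0:ℤ) n).card = n := by rw [Int.card_Ico]; omega
  have h5 : (Finset.Ioc (0:ℤ) n).card = n := by rw [Int.card_Ioc]; omega
  calc _ ≤ (n+n+n+n+n) + n := by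
        gcongr
        · refine le_trans (Finset.card_union_le _ _) ?_
          gcongr
          · refine le_trans (Finset.card_union_le _ _) ?_
            gcongr
            · refine le_trans (Finset.card_union_le _ _) ?_
              gcongr
              · refine le_trans (Finset.card_union_le _ _) ?_
                gcongr
                · exact le_trans (c1 _ _) h0.le
                · exact le_trans (c1 _ _) h3.le
              · exact le_trans (c1 _ _) h1.le
            · exact le_trans (c1 _ _) h3.le
          · exact le_trans (c1 _ _) h0.le
        · exact le_trans (c1 _ _) h5.le
    _ = 6*n := by ring

private lemma tail_bound (α : ℝ) (hα : 2 < α) (M : ℕ) :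
    ∑ i ∈ Finset.range M, ((i:ℝ)+2)^(1-α) ≤ 1/(α-2) := by
  have hM : (0:ℝ) ≤ (M:ℝ) := Nat.cast_nonneg M
  have hanti : AntitoneOn (fun x : ℝ => x^(1-α)) (Set.Icc 1 (1 + M)) := by
    intro x hx y hy hxy
    exact Real.rpow_le_rpow_of_nonpos (lt_of_lt_of_le one_pos hx.1) hxy (by linarith)
  have key := hanti.sum_le_integral
  have hint : ∫ x in (1:ℝ)..(1 + M), x^(1-α) ≤ 1/(α-2) := by
    rw [integral_rpow (Or.inr ⟨by intro h; linarith, by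
      intro h
      rcases Set.mem_uIcc.1 h with ⟨h1, _⟩ | ⟨h2, _⟩ <;> linarith⟩)]
    have hpow : (0:ℝ) ≤ (1 + (M:ℝ))^(1-α+1) := Real.rpow_nonneg (by linarith) _
    rw [Real.one_rpow]
    have heq : ((1 + (M:ℝ))^(1-α+1) - 1)/(1-α+1) = (1 - (1 + (M:ℝ))^(1-α+1))/(α-2) := by
      rw [div_eq_div_iff (by linarith) (by linarith)]; ring
    rw [heq]
    have h2 : (1 - (1 + (M:ℝ))^(1-α+1)) ≤ 1 := by linarith
    gcongr
  calc ∑ i ∈ Finset.range M, ((i:ℝ)+2)^(1-α)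
      = ∑ i ∈ Finset.range M, ((1:ℝ) + ((i+1:ℕ):ℝ))^(1-α) := by
        refine Finset.sum_congr rfl fun i _ => ?_
        push_cast; ring_nf
    _ ≤ ∫ x in (1:ℝ)..(1 + M), x^(1-α) := key
    _ ≤ 1/(α-2) := hint
private lemma sqrt3_facts : (1:ℝ) ≤ Real.sqrt 3 ∧ Real.sqrt 3 ≤ 2 := by
  constructor
  · rw [show (1:ℝ) = Real.sqrt 1 by simp]
    exact Real.sqrt_le_sqrt (by norm_num)
  · rw [show (2:ℝ) = Real.sqrt 4 by rw [show (4:ℝ) = 2^2 by norm_num, Real.sqrt_sq (by norm_num)]]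
    exact Real.sqrt_le_sqrt (by norm_num)

-- point bound (real part); N stands for hexN q, Q for the quadratic form value
private lemma point_bound (α D : ℝ) (hα : 2 < α) (hD : 0 < D) (a b : ℤ) (N : ℕ)
    (hab : ¬(a = 0 ∧ b = 0)) (hQ1 : 1 ≤ a^2 + a*b + b^2) (hQ2 : 3*(N:ℤ)^2 ≤ 4*(a^2 + a*b + b^2)) :
    Real.sqrt (D^2 * ((a:ℝ)^2 + (a:ℝ)*(b:ℝ) + (b:ℝ)^2)) ^ (-α)
      ≤ (D * max 1 (Real.sqrt 3/2 * (N:ℝ))) ^ (-α) := by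
  have hQ1' : (1:ℝ) ≤ (a:ℝ)^2 + (a:ℝ)*(b:ℝ) + (b:ℝ)^2 := by exact_mod_cast hQ1
  have hQ2' : 3*((N:ℝ))^2 ≤ 4*((a:ℝ)^2 + (a:ℝ)*(b:ℝ) + (b:ℝ)^2) := by exact_mod_cast hQ2
  have hNnn : (0:ℝ) ≤ (N:ℝ) := Nat.cast_nonneg N
  have hmaxpos : 0 < D * max 1 (Real.sqrt 3/2 * (N:ℝ)) := by positivity
  refine Real.rpow_le_rpow_of_nonpos hmaxpos ?_ (by linarith)
  rw [Real.le_sqrt hmaxpos.le (by nlinarith)]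
  have hm : (max 1 (Real.sqrt 3/2 * (N:ℝ)))^2 ≤ (a:ℝ)^2 + (a:ℝ)*(b:ℝ) + (b:ℝ)^2 := by
    rcases max_cases (1:ℝ) (Real.sqrt 3/2 * (N:ℝ)) with ⟨hm, _⟩ | ⟨hm, _⟩ <;> rw [hm]
    · simpa using hQ1'
    · have h3 : (Real.sqrt 3/2 * (N:ℝ))^2 = 3/4 * (N:ℝ)^2 := by
        rw [mul_pow, div_pow, Real.sq_sqrt (by norm_num : (0:ℝ) ≤ 3)]; ring
      rw [h3]; linarith
  calc (D * max 1 (Real.sqrt 3/2 * (N:ℝ)))^2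
      = D^2 * (max 1 (Real.sqrt 3/2 * (N:ℝ)))^2 := by ring
    _ ≤ D^2 * ((a:ℝ)^2 + (a:ℝ)*(b:ℝ) + (b:ℝ)^2) := by
        exact mul_le_mul_of_nonneg_left hm (by positivity)

private lemma sum_r_le (α D : ℝ) (hα : 2 < α) (hD : 0 < D) (M : ℕ)
    (tail : ∑ i ∈ Finset.range M, ((i:ℝ)+2)^(1-α) ≤ 1/(α-2)) :
    ∑ n ∈ Finset.range (M+2), (6*(n:ℝ) * (D * max 1 (Real.sqrt 3/2 * (n:ℝ))) ^ (-α))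
      ≤ 6 * D ^ (-α) * (1 + (2 / Real.sqrt 3) ^ α * (1 / (α - 2))) := by
  obtain ⟨h1s3, hs3le2⟩ := sqrt3_facts
  have hs3 : (0:ℝ) < Real.sqrt 3 := by linarith
  set r : ℕ → ℝ := fun n => 6*(n:ℝ) * (D * max 1 (Real.sqrt 3/2 * (n:ℝ))) ^ (-α) with hrdef
  have hr0 : r 0 = 0 := by simp [hrdef]
  have hr1 : r 1 = 6 * D^(-α) := by
    have hm : max (1:ℝ) (Real.sqrt 3/2 * ((1:ℕ):ℝ)) = 1 := by
      rw [max_eq_left]; push_cast; linarith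
    simp only [hrdef, hm]
    push_cast; rw [mul_one]; ring
  have hr2 : ∀ k : ℕ, r (k+2) = 6 * D^(-α) * (2/Real.sqrt 3)^α * ((k:ℝ)+2)^(1-α) := by
    intro k
    have hknn : (0:ℝ) ≤ (k:ℝ) := Nat.cast_nonneg k
    have hk2 : (1:ℝ) ≤ Real.sqrt 3/2 * ((k:ℝ)+2) := by nlinarith
    have hm : max (1:ℝ) (Real.sqrt 3/2 * (((k+2:ℕ)):ℝ)) = Real.sqrt 3/2 * ((k:ℝ)+2) := by
      push_cast; rw [max_eq_right hk2]
    simp only [hrdef, hm]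
    rw [Real.mul_rpow hD.le (by positivity), Real.mul_rpow (by positivity) (by positivity)]
    have e1 : (Real.sqrt 3/2)^(-α) = (2/Real.sqrt 3)^α := by
      rw [Real.rpow_neg (by positivity), ← Real.inv_rpow (by positivity), inv_div]
    have e2 : ((k:ℝ)+2)^(1-α) = ((k:ℝ)+2) * ((k:ℝ)+2)^(-α) := by
      rw [show (1-α) = 1 + (-α) by ring, Real.rpow_add (by positivity), Real.rpow_one]
    rw [e1, e2]
    push_cast
    ring
  rw [Finset.sum_range_succ' r (M+1), Finset.sum_range_succ' (fun i => r (i+1)) M]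
  have hc : (0:ℝ) ≤ 6*D^(-α)*(2/Real.sqrt 3)^α := by positivity
  have hsum : ∑ i ∈ Finset.range M, r (i+1+1)
      = 6*D^(-α)*(2/Real.sqrt 3)^α * ∑ i ∈ Finset.range M, ((i:ℝ)+2)^(1-α) := by
    rw [Finset.mul_sum]
    exact Finset.sum_congr rfl fun i _ => hr2 i
  rw [hsum, hr0, hr1]
  have := mul_le_mul_of_nonneg_left tail hc
  nlinarith [this]


/-- **Hexagonal lattice interference sum.** Over the nonzero points of the hexagonal
lattice with basis `u = (1,0)`, `v = (1/2, √3/2)` scaled by `D` (minimum distance `D`),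
the family `‖x‖^(−α)` is summable and its sum is at most
`6·D^(−α)·(1 + (2/√3)^α·1/(α−2))`. -/
theorem hexagonal_lattice_sum_bound
    (α D : ℝ) (hα : 2 < α) (hD : 0 < D)
    (u v : EuclideanSpace ℝ (Fin 2))
    (hu : u = (WithLp.equiv 2 (Fin 2 → ℝ)).symm ![1, 0])
    (hv : v = (WithLp.equiv 2 (Fin 2 → ℝ)).symm ![1 / 2, Real.sqrt 3 / 2])
    (Λ : Set (EuclideanSpace ℝ (Fin 2)))
    (hΛ : Λ = {x | ∃ q : ℤ × ℤ, q ≠ 0 ∧ x = D • ((q.1 : ℝ) • u + (q.2 : ℝ) • v)}) :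
    Summable (fun x : Λ => ‖(x : EuclideanSpace ℝ (Fin 2))‖ ^ (-α)) ∧
    ∑' x : Λ, ‖(x : EuclideanSpace ℝ (Fin 2))‖ ^ (-α)
      ≤ 6 * D ^ (-α) * (1 + (2 / Real.sqrt 3) ^ α * (1 / (α - 2))) := by
  classical
  have hα2 : (0:ℝ) < α - 2 := by linarith
  obtain ⟨h1s3, hs3le2⟩ := sqrt3_facts
  set B : ℝ := 6 * D ^ (-α) * (1 + (2 / Real.sqrt 3) ^ α * (1 / (α - 2))) with hBdef
  have hBnn : 0 ≤ B := by
    have h1 : (0:ℝ) ≤ (2 / Real.sqrt 3) ^ α := Real.rpow_nonneg (by positivity) _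
    have h2 : (0:ℝ) ≤ D ^ (-α) := Real.rpow_nonneg hD.le _
    have h3 : (0:ℝ) ≤ 1/(α-2) := by positivity
    rw [hBdef]
    positivity
  set F : ℤ × ℤ → EuclideanSpace ℝ (Fin 2) :=
    fun q => D • ((q.1 : ℝ) • u + (q.2 : ℝ) • v) with hFdef
  have hnorm : ∀ q : ℤ × ℤ,
      ‖F q‖ = Real.sqrt (D^2 * ((q.1:ℝ)^2 + (q.1:ℝ)*(q.2:ℝ) + (q.2:ℝ)^2)) := by
    intro q
    simp only [hFdef, hu, hv]
    rw [EuclideanSpace.norm_eq, Fin.sum_univ_two]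
    congr 1
    simp only [PiLp.smul_apply, PiLp.add_apply, WithLp.equiv_symm_apply, PiLp.toLp_apply,
      Matrix.cons_val_zero, Matrix.cons_val_one, Matrix.head_cons, smul_eq_mul,
      Real.norm_eq_abs, sq_abs]
    have h3 : Real.sqrt 3 ^ 2 = 3 := Real.sq_sqrt (by norm_num)
    nlinarith [h3]
  have hinj : Function.Injective F := by
    intro q q' h
    simp only [hFdef, hu, hv] at h
    have e0 := congrArg (fun (x : EuclideanSpace ℝ (Fin 2)) => x 0) h
    have e1 := congrArg (fun (x : EuclideanSpace ℝ (Fin 2)) => x 1) h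
    simp only [PiLp.smul_apply, PiLp.add_apply, WithLp.equiv_symm_apply, PiLp.toLp_apply,
      Matrix.cons_val_zero, Matrix.cons_val_one, Matrix.head_cons, smul_eq_mul] at e0 e1
    have hDne : D ≠ 0 := hD.ne'
    have hs3pos : (0:ℝ) < Real.sqrt 3 / 2 := by positivity
    have h1 : (q.2:ℝ) * (Real.sqrt 3/2) = (q'.2:ℝ) * (Real.sqrt 3/2) := by
      have h2 := mul_left_cancel₀ hDne e1
      linarith [h2]
    have hb : (q.2:ℝ) = (q'.2:ℝ) := mul_right_cancel₀ (ne_of_gt hs3pos) h1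
    have ha : (q.1:ℝ) = (q'.1:ℝ) := by
      have h2 := mul_left_cancel₀ hDne e0
      rw [hb] at h2
      linarith [h2]
    have ha' : q.1 = q'.1 := by exact_mod_cast ha
    have hb' : q.2 = q'.2 := by exact_mod_cast hb
    exact Prod.ext_iff.mpr ⟨ha', hb'⟩
  set S : Set (ℤ × ℤ) := {q : ℤ × ℤ | q ≠ 0} with hSdef
  have hΛ' : Λ = F '' S := by
    rw [hΛ]
    ext x
    simp only [Set.mem_setOf_eq, Set.mem_image, hFdef, hSdef]
    constructor
    · rintro ⟨q, h1, h2⟩; exact ⟨q, h1, h2.symm⟩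
    · rintro ⟨q, h1, h2⟩; exact ⟨q, h1, h2.symm⟩
  have hf0 : ∀ x : EuclideanSpace ℝ (Fin 2), 0 ≤ ‖x‖ ^ (-α) :=
    fun x => Real.rpow_nonneg (norm_nonneg x) _
  set g : ℤ × ℤ → ℝ≥0∞ := fun q => if q = 0 then 0 else ENNReal.ofReal (‖F q‖ ^ (-α)) with hgdef
  have hpoint : ∀ q : ℤ × ℤ, q ≠ 0 →
      ‖F q‖ ^ (-α) ≤ (D * max 1 (Real.sqrt 3/2 * (hexN q : ℝ))) ^ (-α) := by
    intro q hq
    have hab : ¬(q.1 = 0 ∧ q.2 = 0) := fun h => hq (Prod.ext_iff.mpr ⟨h.1, h.2⟩)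
    have hshell : 3*((hexN q : ℤ))^2 ≤ 4*(q.1^2 + q.1*q.2 + q.2^2) := hexQ_shell q.1 q.2
    have := point_bound α D hα hD q.1 q.2 (hexN q) hab (hexQ_one q.1 q.2 hab) hshell
    rw [hnorm q]
    exact this
  have hfiber : ∀ n : ℕ, ∑' q : {q : ℤ × ℤ // hexN q = n}, g q.val
      ≤ ENNReal.ofReal (6*(n:ℝ) * (D * max 1 (Real.sqrt 3/2 * (n:ℝ))) ^ (-α)) := by
    intro n
    rcases Nat.eq_zero_or_pos n with rfl | hn
    · have hz : ∀ q : {q : ℤ × ℤ // hexN q = 0}, g q.val = 0 := by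
        rintro ⟨⟨a, b⟩, hq⟩
        obtain ⟨ha, hb⟩ := hexN_zero a b hq
        have hq0 : (a, b) = (0 : ℤ × ℤ) := by
          rw [Prod.ext_iff]; exact ⟨ha, hb⟩
        simp [hgdef, hq0]
      calc ∑' q : {q : ℤ × ℤ // hexN q = 0}, g q.val
          = ∑' _ : {q : ℤ × ℤ // hexN q = 0}, (0:ℝ≥0∞) := tsum_congr hz
        _ = 0 := tsum_zero
        _ ≤ _ := zero_le
    · have ht : ∑' q : {q : ℤ × ℤ // hexN q = n}, g q.val
          = ∑' q : ℤ × ℤ, Set.indicator {q | hexN q = n} g q := tsum_subtype _ g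
      rw [ht]
      rw [tsum_eq_sum (s := ((Finset.Icc (-(n:ℤ)) n) ×ˢ (Finset.Icc (-(n:ℤ)) n)).filter
          (fun q : ℤ × ℤ => hexN q = n)) (by
        intro q hq
        rw [Set.indicator_apply_eq_zero]
        intro hqn
        exfalso
        apply hq
        have hqn' : hexN q = n := hqn
        have hb := hexN_bounds q.1 q.2 n hqn'
        simp only [Finset.mem_filter, Finset.mem_product, Finset.mem_Icc]
        exact ⟨⟨⟨hb.1, hb.2.1⟩, hb.2.2.1, hb.2.2.2⟩, hqn'⟩)]
      calc ∑ q ∈ ((Finset.Icc (-(n:ℤ)) n) ×ˢ (Finset.Icc (-(n:ℤ)) n)).filter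
              (fun q : ℤ × ℤ => hexN q = n), Set.indicator {q | hexN q = n} g q
          ≤ ∑ _q ∈ ((Finset.Icc (-(n:ℤ)) n) ×ˢ (Finset.Icc (-(n:ℤ)) n)).filter
              (fun q : ℤ × ℤ => hexN q = n),
              ENNReal.ofReal ((D * max 1 (Real.sqrt 3/2 * (n:ℝ))) ^ (-α)) := by
            apply Finset.sum_le_sum
            intro q _hq
            by_cases h1 : q ∈ {q : ℤ × ℤ | hexN q = n}
            · rw [Set.indicator_of_mem h1]
              rw [hgdef]
              simp only
              split_ifs with h2
              · exact zero_le
              · apply ENNReal.ofReal_le_ofReal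
                have h3 := hpoint q h2
                have h4 : hexN q = n := h1
                rw [h4] at h3
                exact h3
            · rw [Set.indicator_of_notMem h1]; exact zero_le
        _ = (((Finset.Icc (-(n:ℤ)) n) ×ˢ (Finset.Icc (-(n:ℤ)) n)).filter
              (fun q : ℤ × ℤ => hexN q = n)).card
              • ENNReal.ofReal ((D * max 1 (Real.sqrt 3/2 * (n:ℝ))) ^ (-α)) :=
            Finset.sum_const _
        _ ≤ (6*n) • ENNReal.ofReal ((D * max 1 (Real.sqrt 3/2 * (n:ℝ))) ^ (-α)) := by
            rw [nsmul_eq_mul, nsmul_eq_mul]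
            have hcard := hex_shell_card n hn
            exact mul_le_mul_left (by exact_mod_cast Nat.cast_le.mpr hcard) _
        _ = ENNReal.ofReal (6*(n:ℝ) * (D * max 1 (Real.sqrt 3/2 * (n:ℝ))) ^ (-α)) := by
            rw [nsmul_eq_mul, ← ENNReal.ofReal_natCast (6*n),
              ← ENNReal.ofReal_mul (by positivity)]
            congr 1
            push_cast
            ring
  have htotal : ∑' q : ℤ × ℤ, g q ≤ ENNReal.ofReal B := by
    have h1 : ∑' q : ℤ × ℤ, g q
        = ∑' (n : ℕ), ∑' (q : {q : ℤ × ℤ // hexN q = n}), g q.val := by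
      rw [← (Equiv.sigmaFiberEquiv hexN).tsum_eq g]
      exact ENNReal.tsum_sigma' _
    rw [h1]
    calc ∑' (n : ℕ), ∑' (q : {q : ℤ × ℤ // hexN q = n}), g q.val
        ≤ ∑' (n : ℕ), ENNReal.ofReal (6*(n:ℝ) * (D * max 1 (Real.sqrt 3/2 * (n:ℝ))) ^ (-α)) :=
          ENNReal.tsum_le_tsum hfiber
      _ ≤ ENNReal.ofReal B := by
          rw [ENNReal.tsum_eq_iSup_sum]
          apply iSup_le
          intro s
          rw [← ENNReal.ofReal_sum_of_nonneg (fun i _ => by positivity)]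
          apply ENNReal.ofReal_le_ofReal
          have hsub : s ⊆ Finset.range (s.sup id + 2) := by
            intro i hi
            have h5 := Finset.le_sup (f := id) hi
            simp only [id] at h5
            exact Finset.mem_range.mpr (by omega)
          refine le_trans (Finset.sum_le_sum_of_subset_of_nonneg hsub
            (fun i _ _ => by positivity)) ?_
          rw [hBdef]
          exact sum_r_le α D hα hD _ (tail_bound α hα _)
  have hSg : ∑' q : S, ENNReal.ofReal (‖F (q : ℤ × ℤ)‖ ^ (-α)) = ∑' q : ℤ × ℤ, g q := by
    rw [tsum_subtype S (fun q => ENNReal.ofReal (‖F q‖ ^ (-α)))]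
    apply tsum_congr
    intro q
    by_cases h : q = 0
    · simp [Set.indicator, hSdef, h, hgdef]
    · simp [Set.indicator, hSdef, h, hgdef]
  have hne : ∑' q : S, ENNReal.ofReal (‖F (q : ℤ × ℤ)‖ ^ (-α)) ≠ ⊤ := by
    rw [hSg]
    exact ne_top_of_le_ne_top ENNReal.ofReal_ne_top htotal
  have hsummable : Summable (fun q : S => ‖F (q : ℤ × ℤ)‖ ^ (-α)) := by
    have h2 := ENNReal.summable_toReal hne
    exact h2.congr (fun q => ENNReal.toReal_ofReal (hf0 _))
  have hbound : ∑' q : S, ‖F (q : ℤ × ℤ)‖ ^ (-α) ≤ B := by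
    rw [← ENNReal.ofReal_le_ofReal_iff hBnn,
      ENNReal.ofReal_tsum_of_nonneg (fun q => hf0 _) hsummable, hSg]
    exact htotal
  constructor
  · rw [hΛ']
    exact (Equiv.summable_iff (Equiv.Set.imageOfInjOn F S hinj.injOn)).mp hsummable
  · have himg := tsum_image (g := F) (s := S)
      (fun y : EuclideanSpace ℝ (Fin 2) => ‖y‖ ^ (-α)) hinj.injOn
    rw [hΛ', himg]
    exact hbound
end

section
/- For every real d > 0 the following two facts hold, exhibiting a three-link configuration (equal link lengths d, with γ0 = 8, α = 3) that is permitted by the pairwise-model safe carrier-sensing range 4d = (γ0^(1/α) + 2)·d but suffers a collision under cumulative interference: (i) the power sensed by the third transmitter from senders at distances 5d and 8d is below the threshold corresponding to range 4d, i.e., (5d)^(−3) + (8d)^(−3) < (4d)^(−3); and (ii) the SIR at the first receiver, whose own transmitter is at distance d and which suffers cumulative interference from senders at distances 6d and 2d, equals d^(−3) / ((6d)^(−3) + (2d)^(−3)) = 54/7, which is strictly less than 8. -/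
/-- **Counterexample: the pairwise-model safe carrier-sensing range fails under
cumulative interference** (three links of equal length `d`, `γ0 = 8`, `α = 3`):
(i) the third transmitter, at distances `5d` and `8d` from the two active senders,
senses a power below the threshold for the range `4d`; (ii) yet the SIR at the first
receiver equals `54/7 < 8`. -/
theorem pairwise_csr_insufficient_example (d : ℝ) (hd : 0 < d) :
    (5 * d) ^ (-3 : ℤ) + (8 * d) ^ (-3 : ℤ) < (4 * d) ^ (-3 : ℤ) ∧
    d ^ (-3 : ℤ) / ((6 * d) ^ (-3 : ℤ) + (2 * d) ^ (-3 : ℤ)) = 54 / 7 ∧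
    (54 / 7 : ℝ) < 8 := by
  have hd' : d ≠ 0 := ne_of_gt hd
  have key : ∀ x : ℝ, x ^ (-3 : ℤ) = (x ^ (3 : ℕ))⁻¹ := by
    intro x
    rw [show (-3 : ℤ) = -(3 : ℕ) from rfl, zpow_neg, zpow_natCast]
  simp only [key]
  refine ⟨?_, ?_, by norm_num⟩
  · rw [inv_eq_one_div, inv_eq_one_div, inv_eq_one_div,
      div_add_div _ _ (by positivity) (by positivity),
      div_lt_div_iff₀ (by positivity) (by positivity)]
    nlinarith [pow_pos hd 3, pow_pos hd 6, sq_nonneg d]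
  · field_simp
    ring
end
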